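/- arXiv:0908.1219 — 6 statements merged into one kernel-verified Lean document; each statement's English description precedes it below -/
import Mathlib

section
/- For all n ≥ 1, ∑_{k=0}^n (-1)^k (n choose k) F_{2n-k}(s) = 0 as a polynomial identity in s. -/
noncomputable def fibPoly : ℕ → Polynomial ℚ
  | 0 => 0
  | 1 => 1
  | n + 2 => fibPoly (n + 1) + Polynomial.X * fibPoly n

lemma fibPoly_add_two (j : ℕ) :
    fibPoly (j + 2) = fibPoly (j + 1) + Polynomial.X * fibPoly j := by
  simp [fibPoly]

lemma aux (n : ℕ) : ∀ j : ℕ,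
    ∑ k ∈ Finset.range (n + 1),
      Polynomial.C ((-1 : ℚ) ^ k * (n.choose k : ℚ)) * fibPoly (j + 2 * n - k)
      = Polynomial.X ^ n * fibPoly j := by
  induction n with
  | zero => intro j; simp
  | succ n ih =>
    intro j
    have step : ∀ k ∈ Finset.range (n + 1),
        Polynomial.C ((-1 : ℚ) ^ (k + 1) * ((n + 1).choose (k + 1) : ℚ)) *
            fibPoly (j + 2 * (n + 1) - (k + 1))
        = Polynomial.C ((-1 : ℚ) ^ (k + 1) * (n.choose (k + 1) : ℚ)) *
            fibPoly ((j + 2) + 2 * n - (k + 1))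
          - Polynomial.C ((-1 : ℚ) ^ k * (n.choose k : ℚ)) *
            fibPoly ((j + 1) + 2 * n - k) := by
      intro k hk
      simp only [Finset.mem_range] at hk
      have h1 : j + 2 * (n + 1) - (k + 1) = (j + 2) + 2 * n - (k + 1) := by omega
      have h2 : (j + 2) + 2 * n - (k + 1) = (j + 1) + 2 * n - k := by omega
      have hneg : ∀ a : ℚ, Polynomial.C ((-1 : ℚ) ^ (k + 1) * a)
          = - Polynomial.C ((-1 : ℚ) ^ k * a) := by
        intro a
        rw [show ((-1 : ℚ) ^ (k + 1) * a) = -((-1 : ℚ) ^ k * a) by ring, map_neg]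
      rw [h1, h2, Nat.choose_succ_succ, Nat.cast_add]
      simp only [hneg, mul_add, map_add]
      ring
    rw [Finset.sum_range_succ', Finset.sum_congr rfl step, Finset.sum_sub_distrib, ih]
    have h' := Finset.sum_range_succ' (fun k =>
      Polynomial.C ((-1 : ℚ) ^ k * (n.choose k : ℚ)) * fibPoly ((j + 2) + 2 * n - k)) (n + 1)
    beta_reduce at h'
    rw [Finset.sum_range_succ, ih (j + 2)] at h'
    simp only [Nat.choose_succ_self, Nat.cast_zero, mul_zero, map_zero, zero_mul, add_zero] at h'
    -- h' : X^n * fibPoly (j+2) = ∑ k<n+1, T1'(k) + zeroterm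
    have h0 : j + 2 * (n + 1) - 0 = (j + 2) + 2 * n - 0 := by omega
    have hgoal0 : Polynomial.C ((-1 : ℚ) ^ 0 * (((n + 1).choose 0 : ℕ) : ℚ)) *
        fibPoly (j + 2 * (n + 1) - 0)
        = Polynomial.C ((-1 : ℚ) ^ 0 * ((n.choose 0 : ℕ) : ℚ)) *
          fibPoly ((j + 2) + 2 * n - 0) := by
      rw [h0]; simp
    rw [hgoal0]
    rw [fibPoly_add_two] at h'
    linear_combination -h'
  
theorem stmt1 (n : ℕ) (hn : 1 ≤ n) :
    ∑ k ∈ Finset.range (n + 1),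
      Polynomial.C ((-1 : ℚ) ^ k * (n.choose k : ℚ)) * fibPoly (2 * n - k) = 0 := by
  have h := aux n 0
  simp only [Nat.zero_add] at h
  rw [h]
  simp [fibPoly]
end

section
/- For all n ≥ 0 and k ≥ 0 with k ≤ n, ∑_{j=0}^k (-1)^{k-j} (k choose j) F_{n+j}(s) = s^k · F_{n-k}(s) as polynomials in s. -/
lemma coeff_id (k j : ℕ) (hj : j ≤ k) :
    ((-1 : ℚ) ^ (k + 1 - (j+1)) * ((k+1).choose (j+1) : ℚ)) =
      (-1 : ℚ) ^ (k - j) * (k.choose j : ℚ) -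
      (-1 : ℚ) ^ (k - (j+1)) * (k.choose (j+1) : ℚ) := by
  have e : k + 1 - (j + 1) = k - j := by omega
  rw [e]
  rcases eq_or_lt_of_le hj with rfl | h
  · simp [Nat.choose_succ_self]
  · have h1 : k - j = (k - (j+1)) + 1 := by omega
    rw [Nat.choose_succ_succ, h1]
    push_cast
    ring

theorem stmt2 (n k : ℕ) (hkn : k ≤ n) :
    ∑ j ∈ Finset.range (k + 1),
      Polynomial.C ((-1 : ℚ) ^ (k - j) * (k.choose j : ℚ)) * fibPoly (n + j) =
      Polynomial.X ^ k * fibPoly (n - k) := by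
  induction k generalizing n with
  | zero => simp
  | succ k ih =>
    have hk : k ≤ n := Nat.le_of_succ_le hkn
    have hk1 : k ≤ n + 1 := by omega
    have key :
        ∑ j ∈ Finset.range (k + 1 + 1),
          Polynomial.C ((-1 : ℚ) ^ (k + 1 - j) * ((k+1).choose j : ℚ)) * fibPoly (n + j) =
        (∑ j ∈ Finset.range (k + 1),
          Polynomial.C ((-1 : ℚ) ^ (k - j) * (k.choose j : ℚ)) * fibPoly (n + 1 + j)) -
        (∑ j ∈ Finset.range (k + 1),
          Polynomial.C ((-1 : ℚ) ^ (k - j) * (k.choose j : ℚ)) * fibPoly (n + j)) := by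
      rw [Finset.sum_range_succ' _ (k + 1), Finset.sum_range_succ'
        (fun j => Polynomial.C ((-1 : ℚ) ^ (k - j) * (k.choose j : ℚ)) * fibPoly (n + j)) k]
      have hz : Polynomial.C ((-1 : ℚ) ^ (k - (k+1)) * (k.choose (k+1) : ℚ)) *
          fibPoly (n + (k+1)) = 0 := by
        simp [Nat.choose_eq_zero_of_lt (Nat.lt_succ_self k)]
      have hext : ∑ j ∈ Finset.range k,
          Polynomial.C ((-1 : ℚ) ^ (k - (j+1)) * (k.choose (j+1) : ℚ)) * fibPoly (n + (j+1)) =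
          ∑ j ∈ Finset.range (k+1),
          Polynomial.C ((-1 : ℚ) ^ (k - (j+1)) * (k.choose (j+1) : ℚ)) * fibPoly (n + (j+1)) := by
        rw [Finset.sum_range_succ, hz, add_zero]
      rw [hext]
      have hterm : ∑ j ∈ Finset.range (k+1),
          Polynomial.C ((-1 : ℚ) ^ (k + 1 - (j+1)) * ((k+1).choose (j+1) : ℚ)) * fibPoly (n + (j+1)) =
          ∑ j ∈ Finset.range (k+1),
          (Polynomial.C ((-1 : ℚ) ^ (k - j) * (k.choose j : ℚ)) * fibPoly (n + 1 + j) -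
           Polynomial.C ((-1 : ℚ) ^ (k - (j+1)) * (k.choose (j+1) : ℚ)) * fibPoly (n + (j+1))) := by
        refine Finset.sum_congr rfl fun j hj => ?_
        have hjk : j ≤ k := by
          have := Finset.mem_range.mp hj; omega
        have e2 : n + 1 + j = n + (j + 1) := by ring
        rw [coeff_id k j hjk, e2, Polynomial.C_sub, sub_mul]
      rw [hterm, Finset.sum_sub_distrib]
      have h0 : Polynomial.C ((-1 : ℚ) ^ (k + 1 - 0) * ((k+1).choose 0 : ℚ)) =
          - Polynomial.C ((-1 : ℚ) ^ (k - 0) * (k.choose 0 : ℚ)) := by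
        simp [pow_succ]
      rw [h0]
      ring
    rw [key, ih (n+1) hk1, ih n hk]
    obtain ⟨m, rfl⟩ : ∃ m, n = m + (k+1) := ⟨n - (k+1), by omega⟩
    have e1 : m + (k+1) + 1 - k = m + 2 := by omega
    have e2 : m + (k+1) - k = m + 1 := by omega
    have e3 : m + (k+1) - (k+1) = m := by omega
    rw [e1, e2, e3]
    have : fibPoly (m + 2) = fibPoly (m + 1) + Polynomial.X * fibPoly m := rfl
    rw [this]
    ring
end

section
/- Define the linear functional M on polynomials in s by M(F_{2n}(s)) = [n = 1] (determined since F_2, F_4, F_6, ... have degrees 0, 1, 2, ...). Then M(F_{2n+1}(s)) = (2n+1) B_{2n} for all n ≥ 0, where B_{2n} are the Bernoulli numbers. -/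
open Finset

theorem sum_range_even_odd {M : Type*} [AddCommMonoid M] (f : ℕ → M) (n : ℕ) :
    ∑ i ∈ range (2*n), f i = (∑ j ∈ range n, f (2*j)) + ∑ j ∈ range n, f (2*j+1) := by
  induction n with
  | zero => simp
  | succ n ih =>
    have : 2*(n+1) = (2*n)+1+1 := by ring
    rw [this, Finset.sum_range_succ, Finset.sum_range_succ, ih,
      Finset.sum_range_succ, Finset.sum_range_succ]
    abel


section FibPart
open Polynomial

noncomputable def gg (M : ℕ) : Polynomial ℚ :=
  ∑ i ∈ range (M+1), ((M.choose i : ℚ) * (-2)^i) • fibPoly i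

noncomputable def hh (M : ℕ) : Polynomial ℚ :=
  ∑ i ∈ range (M+1), ((M.choose i : ℚ) * (-2)^i) • fibPoly (i+1)

theorem gg_succ (M : ℕ) : gg (M+1) = gg M + (-2 : ℚ) • hh M := by
  rw [gg, Finset.sum_range_succ']
  have h0 : (((M+1).choose 0 : ℚ) * (-2)^0) • fibPoly 0 = 0 := by simp [fibPoly]
  rw [h0, add_zero]
  have key : ∀ i ∈ range (M+1), (((M+1).choose (i+1) : ℚ) * (-2)^(i+1)) • fibPoly (i+1)
      = ((M.choose (i+1) : ℚ) * (-2)^(i+1)) • fibPoly (i+1)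
        + (-2:ℚ) • (((M.choose i : ℚ) * (-2)^i) • fibPoly (i+1)) := by
    intro i _
    rw [Nat.choose_succ_succ']
    push_cast
    rw [smul_smul]
    module
  rw [Finset.sum_congr rfl key, Finset.sum_add_distrib]
  congr 1
  · -- ∑ i in range (M+1), C(M,i+1)(-2)^(i+1) • F(i+1) = gg M
    rw [Finset.sum_range_succ]
    simp only [Nat.choose_succ_self, Nat.cast_zero, zero_mul, zero_smul, add_zero]
    rw [gg, Finset.sum_range_succ']
    simp [fibPoly]
  · rw [hh, Finset.smul_sum]

theorem hh_succ (M : ℕ) : hh (M+1) = hh M + (-2 : ℚ) • (hh M + X * gg M) := by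
  rw [hh, Finset.sum_range_succ']
  have key : ∀ i ∈ range (M+1), (((M+1).choose (i+1) : ℚ) * (-2)^(i+1)) • fibPoly (i+1+1)
      = ((M.choose (i+1) : ℚ) * (-2)^(i+1)) • fibPoly (i+2)
        + (-2:ℚ) • (((M.choose i : ℚ) * (-2)^i) • fibPoly (i+2)) := by
    intro i _
    rw [Nat.choose_succ_succ']
    push_cast
    rw [smul_smul]
    module
  rw [Finset.sum_congr rfl key, Finset.sum_add_distrib, add_right_comm]
  congr 1
  · -- ∑ A + term0 = hh M
    rw [Finset.sum_range_succ]
    simp only [Nat.choose_succ_self, Nat.cast_zero, zero_mul, zero_smul, add_zero]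
    rw [hh, Finset.sum_range_succ']
    norm_num
  · -- ∑ B = (-2) • (hh M + X * gg M)
    rw [hh, gg, Finset.mul_sum, ← Finset.sum_add_distrib, ← Finset.smul_sum]
    congr 1
    apply Finset.sum_congr rfl
    intro i _
    have fib2 : fibPoly (i+2) = fibPoly (i+1) + X * fibPoly i := rfl
    rw [fib2, smul_add, mul_smul_comm]

theorem gg_hh_parity (k : ℕ) :
    gg (2*k) = 0 ∧ hh (2*k) = (1+4*X)^k ∧
    gg (2*k+1) = (-2:ℚ) • (1+4*X)^k ∧ hh (2*k+1) = -(1+4*X)^k := by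
  have hC : (C (-2:ℚ) : Polynomial ℚ) = -2 := by
    rw [map_neg, show (2:ℚ) = ((2:ℕ):ℚ) by norm_num, Polynomial.C_eq_natCast]
    norm_num
  induction k with
  | zero =>
    have g0 : gg 0 = 0 := by simp [gg, fibPoly]
    have h0 : hh 0 = 1 := by simp [hh, fibPoly]
    refine ⟨g0, by simpa using h0, ?_, ?_⟩
    · rw [gg_succ, g0, h0]
      simp only [Polynomial.smul_eq_C_mul, hC]
      ring
    · rw [hh_succ, g0, h0]
      simp only [Polynomial.smul_eq_C_mul, hC]
      ring
  | succ k ih =>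
    obtain ⟨g0, h0, g1, h1⟩ := ih
    have e2 : 2*(k+1) = 2*k+1+1 := by ring
    have g2 : gg (2*(k+1)) = 0 := by
      rw [e2, gg_succ, g1, h1]
      simp only [Polynomial.smul_eq_C_mul, hC]
      ring
    have h2 : hh (2*(k+1)) = (1+4*X)^(k+1) := by
      rw [e2, hh_succ, g1, h1]
      simp only [Polynomial.smul_eq_C_mul, hC]
      ring
    refine ⟨g2, h2, ?_, ?_⟩
    · rw [gg_succ, g2, h2]
      simp only [Polynomial.smul_eq_C_mul, hC]
      ring
    · rw [hh_succ, g2, h2]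
      simp only [Polynomial.smul_eq_C_mul, hC]
      ring

theorem gg_even (k : ℕ) : gg (2*k) = 0 := (gg_hh_parity k).1

end FibPart

section BernPart
open PowerSeries

noncomputable def B2 : ℚ⟦X⟧ := rescale 2 (bernoulliPowerSeries ℚ)

theorem B2_neg : rescale (-2 : ℚ) (bernoulliPowerSeries ℚ) = B2 + (PowerSeries.C 2) * X := by
  ext n
  rw [B2]
  simp only [coeff_rescale, bernoulliPowerSeries, coeff_mk, map_add, coeff_C_mul, coeff_X]
  rcases Nat.even_or_odd n with he | ho
  · have h1 : n ≠ 1 := by rintro rfl; exact (Nat.not_even_iff_odd.2 odd_one) he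
    rw [Even.neg_pow he, if_neg h1]
    ring
  · rcases eq_or_ne n 1 with rfl | h1
    · norm_num [algebraMap]
    · have hb : bernoulli n = 0 := by
        rw [bernoulli_eq_bernoulli'_of_ne_one h1]
        obtain ⟨m, rfl⟩ := ho
        exact bernoulli'_eq_zero_of_odd ⟨m, by omega⟩ (by omega)
      rw [if_neg h1, hb]
      simp

theorem rescale_X_eq (a : ℚ) : rescale a (X : ℚ⟦X⟧) = (PowerSeries.C a) * X := by
  ext n
  simp only [coeff_rescale, coeff_X, coeff_C_mul]
  rcases eq_or_ne n 1 with rfl | h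
  · simp
  · simp [h]

theorem hB2 : B2 * (exp ℚ * exp ℚ - 1) = (PowerSeries.C 2) * X := by
  have h := congrArg (rescale (2:ℚ)) (bernoulliPowerSeries_mul_exp_sub_one ℚ)
  rw [map_mul, map_sub, map_one, rescale_X_eq] at h
  rw [B2, ← h]
  congr 2
  have h2 := exp_pow_eq_rescale_exp (A := ℚ) 2
  rw [show ((2:ℕ):ℚ) = 2 from by norm_num] at h2
  rw [← h2]
  ring

theorem exp_ne_zero : (exp ℚ) ≠ 0 := by
  intro h
  have := congrArg constantCoeff h
  rw [constantCoeff_exp] at this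
  simp at this

theorem negexp_mul : rescale (-1 : ℚ) (exp ℚ) * exp ℚ = 1 := by
  have h := exp_mul_exp_eq_exp_add (-1 : ℚ) 1
  rw [neg_add_cancel, rescale_zero] at h
  simpa using h

theorem E_even : rescale (-1 : ℚ) (B2 * exp ℚ) = B2 * exp ℚ := by
  apply mul_right_cancel₀ exp_ne_zero
  rw [map_mul, B2, rescale_rescale,
    show ((2:ℚ) * (-1:ℚ)) = -2 from by norm_num, B2_neg, ← B2]
  rw [mul_assoc, negexp_mul, mul_one]
  linear_combination -hB2

theorem coeff_E_odd (n : ℕ) : (coeff (2*n+1)) (B2 * exp ℚ) = 0 := by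
  have h := congrArg (coeff (2*n+1)) E_even
  rw [coeff_rescale, Odd.neg_one_pow ⟨n, by ring⟩, neg_one_mul] at h
  linarith

theorem bern_sum (n : ℕ) :
    ∑ i ∈ range (2*n+2), ((2*n+1).choose i : ℚ) * 2^i * bernoulli i = 0 := by
  have h0 := coeff_E_odd n
  rw [coeff_mul, Finset.Nat.sum_antidiagonal_eq_sum_range_succ_mk] at h0
  dsimp only at h0
  have key : ∀ i ∈ range (2*n+2), ((2*n+1).choose i : ℚ) * 2^i * bernoulli i
      = (Nat.factorial (2*n+1) : ℚ) * ((coeff i) B2 * (coeff (2*n+1-i)) (exp ℚ)) := by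
    intro i hi
    rw [mem_range] at hi
    have hle : i ≤ 2*n+1 := by omega
    rw [B2, coeff_rescale, bernoulliPowerSeries, coeff_mk, coeff_exp,
      Nat.cast_choose ℚ hle]
    have f1 : (Nat.factorial i : ℚ) ≠ 0 := Nat.cast_ne_zero.2 (Nat.factorial_ne_zero i)
    have f2 : (Nat.factorial (2*n+1-i) : ℚ) ≠ 0 := Nat.cast_ne_zero.2 (Nat.factorial_ne_zero _)
    simp only [Algebra.algebraMap_self_apply, one_div]
    field_simp
  have hr : range (2*n+2) = range ((2*n+1).succ) := by norm_num
  rw [Finset.sum_congr rfl key, ← Finset.mul_sum, hr, h0, mul_zero]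

theorem bern_even_sum (n : ℕ) :
    ∑ j ∈ range (n+1), ((2*n+1).choose (2*j) : ℚ) * 4^j * bernoulli (2*j) = 2*n+1 := by
  have h := bern_sum n
  rw [show 2*n+2 = 2*(n+1) from by ring, sum_range_even_odd] at h
  have hodd : ∑ j ∈ range (n+1), ((2*n+1).choose (2*j+1) : ℚ) * 2^(2*j+1) * bernoulli (2*j+1)
      = -(2*(n:ℚ)+1) := by
    rw [Finset.sum_eq_single_of_mem 0 (by simp)]
    · simp [Nat.choose_one_right]
      ring
    · intro j _ hj
      have hb : bernoulli (2*j+1) = 0 := by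
        rw [bernoulli_eq_bernoulli'_of_ne_one (by omega)]
        exact bernoulli'_eq_zero_of_odd ⟨j, by ring⟩ (by omega)
      rw [hb, mul_zero]
  have heven : ∀ j ∈ range (n+1), ((2*n+1).choose (2*j) : ℚ) * 2^(2*j) * bernoulli (2*j)
      = ((2*n+1).choose (2*j) : ℚ) * 4^j * bernoulli (2*j) := by
    intro j _
    rw [pow_mul]
    norm_num
  rw [Finset.sum_congr rfl heven, hodd] at h
  linarith

end BernPart

section MainPart

theorem lemA (M : Polynomial ℚ →ₗ[ℚ] ℚ)
    (hM : ∀ n : ℕ, M (fibPoly (2 * n)) = if n = 1 then 1 else 0) (m : ℕ) :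
    ∑ j ∈ range (m+1), (((2*m+2).choose (2*j+1) : ℚ)) * 4^j * M (fibPoly (2*j+1))
      = (2*(m:ℚ)+2)*(2*(m:ℚ)+1) := by
  have hgg : gg (2*m+2) = 0 := by
    have := gg_even (m+1)
    rwa [show 2*(m+1) = 2*m+2 from by ring] at this
  have h0 : (0:ℚ) = ∑ i ∈ range (2*m+3), ((2*m+2).choose i : ℚ)*(-2)^i * M (fibPoly i) := by
    calc (0:ℚ) = M (gg (2*m+2)) := by rw [hgg, map_zero]
    _ = _ := by
        rw [gg, map_sum]
        exact Finset.sum_congr rfl fun i _ => by rw [map_smul, smul_eq_mul]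
  have h1 : (0:ℚ) = ∑ i ∈ range (2*(m+2)), ((2*m+2).choose i : ℚ)*(-2)^i * M (fibPoly i) := by
    rw [show 2*(m+2) = (2*m+3)+1 from by ring, Finset.sum_range_succ,
      Nat.choose_eq_zero_of_lt (by omega)]
    push_cast
    rw [zero_mul, zero_mul, add_zero]
    exact h0
  rw [sum_range_even_odd] at h1
  have heven : ∑ j ∈ range (m+2), ((2*m+2).choose (2*j) : ℚ)*(-2)^(2*j) * M (fibPoly (2*j))
      = ((2*m+2).choose 2 : ℚ) * 4 := by
    rw [Finset.sum_eq_single_of_mem 1 (by simp)]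
    · rw [hM 1, if_pos rfl]
      norm_num
    · intro j _ hj
      rw [hM j, if_neg hj, mul_zero]
  have hodd : ∑ j ∈ range (m+2), ((2*m+2).choose (2*j+1) : ℚ)*(-2)^(2*j+1) * M (fibPoly (2*j+1))
      = -2 * ∑ j ∈ range (m+1), (((2*m+2).choose (2*j+1) : ℚ)) * 4^j * M (fibPoly (2*j+1)) := by
    rw [Finset.sum_range_succ, Nat.choose_eq_zero_of_lt (by omega)]
    push_cast
    rw [zero_mul, zero_mul, add_zero, Finset.mul_sum]
    refine Finset.sum_congr rfl fun j _ => ?_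
    rw [pow_succ, pow_mul]
    norm_num
    ring
  rw [heven, hodd] at h1
  have hch : ((2*m+2).choose 2 : ℚ) = (m+1)*(2*m+1) := by
    have : (2*m+2).choose 2 = (m+1)*(2*m+1) := by
      rw [Nat.choose_two_right, show 2*m+2-1 = 2*m+1 from rfl,
        show (2*m+2)*(2*m+1) = ((m+1)*(2*m+1))*2 from by ring,
        Nat.mul_div_cancel _ (by norm_num)]
    rw [this]
    push_cast
    ring
  rw [hch] at h1
  linarith

theorem bside (n : ℕ) :
    ∑ j ∈ range (n+1), ((2*n+2).choose (2*j+1) : ℚ) * 4^j * ((2*(j:ℚ)+1) * _root_.bernoulli (2*j))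
      = (2*(n:ℚ)+2)*(2*(n:ℚ)+1) := by
  have key : ∀ j ∈ range (n+1), ((2*n+2).choose (2*j+1) : ℚ) * 4^j * ((2*(j:ℚ)+1) * _root_.bernoulli (2*j))
      = (2*(n:ℚ)+2) * (((2*n+1).choose (2*j) : ℚ) * 4^j * _root_.bernoulli (2*j)) := by
    intro j _
    have h := Nat.add_one_mul_choose_eq (2*n+1) (2*j)
    have h2 : ((2*n+2 : ℕ) : ℚ) * ((2*n+1).choose (2*j) : ℚ)
        = ((2*n+2).choose (2*j+1) : ℚ) * ((2*j+1 : ℕ) : ℚ) := by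
      exact_mod_cast congrArg (Nat.cast : ℕ → ℚ) h
    push_cast at h2
    linear_combination (-1:ℚ) * (4:ℚ)^j * _root_.bernoulli (2*j) * h2
  rw [Finset.sum_congr rfl key, ← Finset.mul_sum, bern_even_sum]

/-- If M is the linear functional with M(F_(2n)) = [n = 1], then
M(F_(2n+1)) = (2n+1) B_(2n). -/
theorem stmt5 (M : Polynomial ℚ →ₗ[ℚ] ℚ)
    (hM : ∀ n : ℕ, M (fibPoly (2 * n)) = if n = 1 then 1 else 0)
    (n : ℕ) :
    M (fibPoly (2 * n + 1)) = (2 * (n : ℚ) + 1) * bernoulli (2 * n) := by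
  induction n using Nat.strong_induction_on with
  | _ n IH =>
    have h1 := lemA M hM n
    have h2 := bside n
    have h3 : ∑ j ∈ range (n+1), ((2*n+2).choose (2*j+1) : ℚ) * 4^j *
        (M (fibPoly (2*j+1)) - (2*(j:ℚ)+1) * _root_.bernoulli (2*j)) = 0 := by
      have : ∀ j ∈ range (n+1), ((2*n+2).choose (2*j+1) : ℚ) * 4^j *
          (M (fibPoly (2*j+1)) - (2*(j:ℚ)+1) * _root_.bernoulli (2*j))
          = ((2*n+2).choose (2*j+1) : ℚ) * 4^j * M (fibPoly (2*j+1))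
            - ((2*n+2).choose (2*j+1) : ℚ) * 4^j * ((2*(j:ℚ)+1) * _root_.bernoulli (2*j)) := by
        intro j _; ring
      rw [Finset.sum_congr rfl this, Finset.sum_sub_distrib, h1, h2, sub_self]
    rw [Finset.sum_range_succ] at h3
    have h4 : ∑ j ∈ range n, ((2*n+2).choose (2*j+1) : ℚ) * 4^j *
        (M (fibPoly (2*j+1)) - (2*(j:ℚ)+1) * _root_.bernoulli (2*j)) = 0 := by
      refine Finset.sum_eq_zero fun j hj => ?_
      rw [mem_range] at hj
      rw [IH j hj, sub_self, mul_zero]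
    rw [h4, zero_add] at h3
    have hc : ((2*n+2).choose (2*n+1) : ℚ) ≠ 0 := by
      rw [show 2*n+2 = (2*n+1)+1 from rfl, Nat.choose_succ_self_right]
      positivity
    have h4pow : ((4:ℚ)^n) ≠ 0 := by positivity
    have := mul_eq_zero.mp h3
    rcases this with h | h
    · rcases mul_eq_zero.mp h with h' | h'
      · exact absurd h' hc
      · exact absurd h' h4pow
    · linarith [sub_eq_zero.mp h]

end MainPart
end

section
/- For n ≥ 0, F_{2n+1}(s) = ∑_{j=0}^n C(2n+1, 2j+1) · (B_{2n-2j}/(j+1)) · F_{2j+2}(s) as polynomials in s, where B denotes Bernoulli numbers. -/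
open Finset

open Polynomial in
lemma fib_comp : ∀ m : ℕ, (2 * X + 1) * (fibPoly m).comp (X ^ 2 + X) =
    (X + 1) ^ m - (-X : Polynomial ℚ) ^ m
  | 0 => by simp [fibPoly]
  | 1 => by simp [fibPoly]; ring
  | n + 2 => by
    have h1 := fib_comp (n + 1)
    have h2 := fib_comp n
    rw [show fibPoly (n + 2) = fibPoly (n + 1) + X * fibPoly n from rfl,
      add_comp, mul_comp, X_comp, mul_add, h1, mul_left_comm, h2]
    ring

open Polynomial in
lemma comp_inj {p q : Polynomial ℚ} (h : p.comp (X ^ 2 + X) = q.comp (X ^ 2 + X)) :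
    p = q := by
  by_contra hne
  have h0 : (p - q).comp (X ^ 2 + X) = 0 := by rw [sub_comp, h, sub_self]
  rcases Polynomial.comp_eq_zero_iff.mp h0 with h1 | ⟨_, h2⟩
  · exact hne (sub_eq_zero.mp h1)
  · have := congrArg (fun r => Polynomial.coeff r 2) h2
    simp [coeff_C, coeff_X] at this

lemma sum_range_pairs (h : ℕ → ℚ) (k : ℕ) :
    ∑ i ∈ range (2 * k), h i = ∑ j ∈ range k, (h (2 * j) + h (2 * j + 1)) := by
  induction k with
  | zero => simp
  | succ k ih =>
    rw [show 2 * (k + 1) = 2 * k + 1 + 1 by ring, sum_range_succ, sum_range_succ, ih,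
      sum_range_succ]
    ring

open Polynomial in
lemma key_scalar (n : ℕ) (x : ℚ) :
    ∑ j ∈ range (n + 1), ((2 * n + 2).choose (2 * j + 2) : ℚ) *
        _root_.bernoulli (2 * n - 2 * j) *
      ((x + 1) ^ (2 * j + 2) - x ^ (2 * j + 2)) =
      (n + 1) * ((x + 1) ^ (2 * n + 1) + x ^ (2 * n + 1)) := by
  set m := 2 * n + 2 with hm
  set g : ℕ → ℚ := fun i => (m.choose i : ℚ) * _root_.bernoulli (m - i) *
    ((x + 1) ^ i - x ^ i) with hg
  have heval : ∀ y : ℚ, (Polynomial.bernoulli m).eval y =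
      ∑ i ∈ range (m + 1), (m.choose i : ℚ) * _root_.bernoulli (m - i) * y ^ i := by
    intro y
    rw [Polynomial.bernoulli_def, eval_finset_sum]
    refine sum_congr rfl fun i _ => ?_
    rw [eval_monomial]; ring
  have hfull : ∑ i ∈ range (m + 1), g i = m * x ^ (2 * n + 1) := by
    have h := Polynomial.bernoulli_eval_one_add m x
    rw [heval, heval] at h
    have hsub : ∑ i ∈ range (m + 1), g i =
        ∑ i ∈ range (m + 1), (m.choose i : ℚ) * _root_.bernoulli (m - i) * (x + 1) ^ i -
          ∑ i ∈ range (m + 1), (m.choose i : ℚ) * _root_.bernoulli (m - i) * x ^ i := by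
      rw [← sum_sub_distrib]
      exact sum_congr rfl fun i _ => by simp only [hg]; ring
    rw [show (1 : ℚ) + x = x + 1 by ring] at h
    rw [hsub, h]
    have hm1 : m - 1 = 2 * n + 1 := by omega
    rw [hm1]; ring
  have hodd : ∑ j ∈ range (n + 1), g (2 * j + 1) =
      -((n : ℚ) + 1) * ((x + 1) ^ (2 * n + 1) - x ^ (2 * n + 1)) := by
    rw [sum_range_succ]
    have hz : ∑ j ∈ range n, g (2 * j + 1) = 0 := by
      refine sum_eq_zero fun j hj => ?_
      have hjn : j < n := mem_range.mp hj
      have hodd' : Odd (m - (2 * j + 1)) := ⟨n - j, by omega⟩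
      have hne1 : m - (2 * j + 1) ≠ 1 := by omega
      have hgt : 1 < m - (2 * j + 1) := by omega
      simp only [hg]
      rw [bernoulli_eq_bernoulli'_of_ne_one hne1, bernoulli'_eq_zero_of_odd hodd' hgt]
      ring
    rw [hz, zero_add]
    simp only [hg]
    have h1 : m - (2 * n + 1) = 1 := by omega
    have h2 : m.choose (2 * n + 1) = m := by
      rw [hm, show 2 * n + 2 = (2 * n + 1) + 1 from rfl, Nat.choose_succ_self_right]
    rw [h1, h2, _root_.bernoulli_one, hm]
    push_cast
    ring
  have heven : ∑ j ∈ range (n + 2), g (2 * j) =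
      ∑ j ∈ range (n + 1), g (2 * j + 2) := by
    rw [sum_range_succ', show g (2 * 0) = 0 by simp [hg], add_zero]
    exact sum_congr rfl fun j _ => by ring_nf
  have hsplit : ∑ i ∈ range (m + 1), g i =
      ∑ j ∈ range (n + 1), (g (2 * j) + g (2 * j + 1)) + g (2 * (n + 1)) := by
    rw [show m + 1 = 2 * (n + 1) + 1 by omega, sum_range_succ, sum_range_pairs]
  have hgoal : ∀ j ∈ range (n + 1),
      ((2 * n + 2).choose (2 * j + 2) : ℚ) * _root_.bernoulli (2 * n - 2 * j) *
        ((x + 1) ^ (2 * j + 2) - x ^ (2 * j + 2)) = g (2 * j + 2) := by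
    intro j hj
    have hjn : j < n + 1 := mem_range.mp hj
    have hsub : m - (2 * j + 2) = 2 * n - 2 * j := by omega
    simp only [hg, hsub]
    rfl
  rw [sum_congr rfl hgoal, ← heven, sum_range_succ]
  have hfin := hfull
  rw [hsplit, sum_add_distrib, hodd] at hfin
  have hmq : (m : ℚ) = 2 * n + 2 := by rw [hm]; push_cast; ring
  rw [hmq] at hfin
  linarith [hfin]

open Polynomial in
lemma key_poly (n : ℕ) : ((X : Polynomial ℚ) + 1) ^ (2 * n + 1) + X ^ (2 * n + 1) =
    ∑ j ∈ Finset.range (n + 1),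
      Polynomial.C (((2 * n + 1).choose (2 * j + 1) : ℚ) *
          (_root_.bernoulli (2 * n - 2 * j) / ((j : ℚ) + 1))) *
        (((X : Polynomial ℚ) + 1) ^ (2 * j + 2) - X ^ (2 * j + 2)) := by
  apply Polynomial.funext
  intro x
  simp only [eval_finset_sum, eval_mul, eval_C, eval_add, eval_pow, eval_X, eval_one, eval_sub]
  have hn1 : ((n : ℚ) + 1) ≠ 0 := by positivity
  apply mul_left_cancel₀ hn1
  rw [← key_scalar n x, Finset.mul_sum]
  refine Finset.sum_congr rfl fun j hj => ?_
  have hc : ((2 * n + 2).choose (2 * j + 2) : ℚ) * (2 * (j : ℚ) + 2) =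
      (2 * (n : ℚ) + 2) * ((2 * n + 1).choose (2 * j + 1) : ℚ) := by
    have h2 : (2 * n + 2) * (2 * n + 1).choose (2 * j + 1) =
        (2 * n + 2).choose (2 * j + 2) * (2 * j + 2) := by
      simpa [Nat.succ_eq_add_one] using Nat.add_one_mul_choose_eq (2 * n + 1) (2 * j + 1)
    exact_mod_cast h2.symm
  have hj1 : ((j : ℚ) + 1) ≠ 0 := by positivity
  have hc' : (((2 * n + 2).choose (2 * j + 2) : ℕ) : ℚ) =
      ((n : ℚ) + 1) * ((2 * n + 1).choose (2 * j + 1) : ℚ) / ((j : ℚ) + 1) := by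
    field_simp
    linear_combination hc / 2
  rw [hc']
  ring

theorem stmt6 (n : ℕ) :
    fibPoly (2 * n + 1) =
      ∑ j ∈ Finset.range (n + 1),
        Polynomial.C (((2 * n + 1).choose (2 * j + 1) : ℚ) *
            (bernoulli (2 * n - 2 * j) / ((j : ℚ) + 1))) * fibPoly (2 * j + 2) := by
  apply comp_inj (h := ?_)
  have h2X : (2 * Polynomial.X + 1 : Polynomial ℚ) ≠ 0 := fun h => by
    simpa using congrArg (Polynomial.eval 0) h
  apply mul_left_cancel₀ h2X
  rw [fib_comp, Polynomial.sum_comp, Finset.mul_sum]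
  have key : ∀ j ∈ Finset.range (n + 1),
      (2 * Polynomial.X + 1 : Polynomial ℚ) *
        ((Polynomial.C (((2 * n + 1).choose (2 * j + 1) : ℚ) *
            (bernoulli (2 * n - 2 * j) / ((j : ℚ) + 1))) * fibPoly (2 * j + 2)).comp
          (Polynomial.X ^ 2 + Polynomial.X)) =
      Polynomial.C (((2 * n + 1).choose (2 * j + 1) : ℚ) *
          (bernoulli (2 * n - 2 * j) / ((j : ℚ) + 1))) *
        (((Polynomial.X : Polynomial ℚ) + 1) ^ (2 * j + 2) -
          Polynomial.X ^ (2 * j + 2)) := by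
    intro j hj
    rw [Polynomial.mul_comp, Polynomial.C_comp, mul_left_comm, fib_comp]
    congr 1
    rw [Even.neg_pow ⟨j + 1, by ring⟩ (Polynomial.X : Polynomial ℚ)]
  rw [Finset.sum_congr rfl key,
    Odd.neg_pow ⟨n, by ring⟩ (Polynomial.X : Polynomial ℚ), sub_neg_eq_add, key_poly]
end

section
/- (v. Ettingshausen–Seidel–Kaneko identity) For all n ≥ 0, ∑_{i=0}^{n+1} C(n+1, i) (n+i+1) B_{n+i} = 0, where B denotes the Bernoulli numbers. -/
open Finset

private def Sb (m n : ℕ) : ℚ := ∑ i ∈ range (m + 1), (m.choose i : ℚ) * bernoulli (n + i)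

private lemma Sb_rec (m n : ℕ) : Sb (m + 1) n = Sb m n + Sb m (n + 1) := by
  unfold Sb
  rw [Finset.sum_range_succ' (fun i => ((m+1).choose i : ℚ) * bernoulli (n + i)),
    Finset.sum_range_succ' (fun i => (m.choose i : ℚ) * bernoulli (n + i))]
  have hsplit : ∀ i ∈ range (m + 1),
      (((m+1).choose (i+1) : ℚ)) * bernoulli (n + (i+1))
        = (m.choose i : ℚ) * bernoulli (n + 1 + i)
          + (m.choose (i+1) : ℚ) * bernoulli (n + (i+1)) := by
    intro i _
    rw [Nat.choose_succ_succ, show n + 1 + i = n + (i + 1) by ring]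
    push_cast
    ring
  rw [Finset.sum_congr rfl hsplit, Finset.sum_add_distrib,
    Finset.sum_range_succ (fun i => (m.choose (i+1) : ℚ) * bernoulli (n + (i+1)))]
  simp [Nat.choose_succ_self]
  ring

private lemma Sb_base (m : ℕ) : Sb m 0 = (-1 : ℚ)^m * bernoulli m := by
  unfold Sb
  have : ∀ i ∈ range (m+1), (m.choose i : ℚ) * bernoulli (0 + i)
      = (m.choose i : ℚ) * bernoulli i := by intro i _; rw [Nat.zero_add]
  rw [Finset.sum_congr rfl this, Finset.sum_range_succ, sum_bernoulli]
  rcases Nat.lt_or_ge m 2 with h | h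
  · interval_cases m <;> norm_num [bernoulli_one, bernoulli_zero]
  · have hm1 : m ≠ 1 := by omega
    rcases Nat.even_or_odd m with he | ho
    · simp [hm1, he.neg_one_pow]
    · have hz : bernoulli m = 0 := by
        rw [bernoulli_eq_bernoulli'_of_ne_one hm1,
          bernoulli'_eq_zero_of_odd ho (by omega)]
      simp [hm1, hz]

private lemma Sb_symm (m : ℕ) : ∀ n, Sb m n = (-1 : ℚ)^(m+n) * Sb n m := by
  induction m with
  | zero =>
    intro n
    have h0 : Sb 0 n = bernoulli n := by unfold Sb; simp
    have hpow : (-1 : ℚ)^(0+n) * (-1)^n = 1 := by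
      rw [← pow_add, show 0+n+n = 2*n by omega, pow_mul]; norm_num
    rw [h0, Sb_base n, ← mul_assoc, hpow, one_mul]
  | succ m ih =>
    intro n
    rw [Sb_rec, ih n, ih (n+1)]
    have hrec : Sb (n+1) m = Sb n m + Sb n (m+1) := Sb_rec n m
    have : Sb n (m+1) = Sb (n+1) m - Sb n m := by rw [hrec]; ring
    rw [this]
    rw [show m + (n+1) = m + n + 1 by ring, show m + 1 + n = m + n + 1 by ring]
    ring

/-- The v. Ettingshausen–Seidel–Kaneko identity:
∑_(i=0)^(n+1) C(n+1, i) (n+i+1) B_(n+i) = 0 for all n ≥ 0. -/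
theorem stmt7 (n : ℕ) :
    ∑ i ∈ Finset.range (n + 2),
      ((n + 1).choose i : ℚ) * ((n : ℚ) + (i : ℚ) + 1) * bernoulli (n + i) = 0 := by
  have hsplit : ∀ i ∈ range (n + 2),
      ((n + 1).choose i : ℚ) * ((n : ℚ) + (i : ℚ) + 1) * bernoulli (n + i)
        = ((n : ℚ) + 1) * (((n+1).choose i : ℚ) * bernoulli (n + i))
          + (i : ℚ) * ((n+1).choose i : ℚ) * bernoulli (n + i) := by
    intro i _; ring
  rw [Finset.sum_congr rfl hsplit, Finset.sum_add_distrib, ← Finset.mul_sum]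
  have h1 : ∑ i ∈ range (n + 2), ((n+1).choose i : ℚ) * bernoulli (n + i) = Sb (n+1) n := rfl
  rw [h1]
  have h2 : ∑ i ∈ range (n + 2), (i : ℚ) * ((n+1).choose i : ℚ) * bernoulli (n + i)
      = ((n : ℚ) + 1) * Sb n (n+1) := by
    rw [Finset.sum_range_succ' (fun i => (i : ℚ) * ((n+1).choose i : ℚ) * bernoulli (n + i))]
    have heach : ∀ i ∈ range (n+1),
        ((i+1 : ℕ) : ℚ) * ((n+1).choose (i+1) : ℚ) * bernoulli (n + (i+1))
          = ((n : ℚ) + 1) * ((n.choose i : ℚ) * bernoulli (n + 1 + i)) := by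
      intro i _
      have hc : (n+1) * n.choose i = (n+1).choose (i+1) * (i+1) := Nat.add_one_mul_choose_eq n i
      have hq : ((n : ℚ) + 1) * (n.choose i : ℚ) = ((n+1).choose (i+1) : ℚ) * ((i : ℚ)+1) := by
        exact_mod_cast congrArg (fun x : ℕ => (x : ℚ)) hc
      rw [show n + 1 + i = n + (i + 1) by ring]
      push_cast
      linear_combination -bernoulli ((n : ℕ) + (i + 1)) * hq
    rw [Finset.sum_congr rfl heach, ← Finset.mul_sum]
    simp [Sb]
  rw [h2, Sb_symm (n+1) n]
  have : (-1 : ℚ)^(n + 1 + n) = -1 := by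
    rw [show n + 1 + n = 2*n + 1 by ring, pow_succ, pow_mul]
    norm_num
  rw [this]
  ring
end

section
/- Define the Seidel triangle (g_{i,j}) for Genocchi numbers by g_{1,1} = g_{2,1} = 1, g_{i,j} = 0 for j ≤ 0 or j > ⌈i/2⌉, g_{2i+1,j} = g_{2i+1,j-1} + g_{2i,j}, and g_{2i,j} = g_{2i,j+1} + g_{2i-1,j}. Then for 1 ≤ k ≤ n, g_{2n,k} = (-1)^n L(s^{n+1-k} F_{2k-1}(s)), and for 1 ≤ k ≤ n+1, g_{2n+1,k} = (-1)^n L(s^{n+1-k} F_{2k}(s)), where L is the linear functional with L(F_{2j+1}) = [j = 0]. -/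
/-- The Seidel triangle for Genocchi numbers is given by
g_(2n,k) = (-1)^n L(s^(n+1-k) F_(2k-1)) for 1 ≤ k ≤ n and
g_(2n+1,k) = (-1)^n L(s^(n+1-k) F_(2k)) for 1 ≤ k ≤ n+1. -/
theorem stmt10 (g : ℕ → ℕ → ℚ)
    (h11 : g 1 1 = 1) (h21 : g 2 1 = 1)
    (hzero : ∀ i j : ℕ, j = 0 ∨ (i + 1) / 2 < j → g i j = 0)
    (hodd : ∀ i : ℕ, 1 ≤ i → ∀ j : ℕ, 1 ≤ j → j ≤ i + 1 →
      g (2 * i + 1) j = g (2 * i + 1) (j - 1) + g (2 * i) j)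
    (heven : ∀ i : ℕ, 1 ≤ i → ∀ j : ℕ, 1 ≤ j → j ≤ i →
      g (2 * i) j = g (2 * i) (j + 1) + g (2 * i - 1) j)
    (L : Polynomial ℚ →ₗ[ℚ] ℚ)
    (hL : ∀ k : ℕ, L (fibPoly (2 * k + 1)) = if k = 0 then 1 else 0) :
    (∀ n k : ℕ, 1 ≤ k → k ≤ n →
      g (2 * n) k = (-1) ^ n * L (Polynomial.X ^ (n + 1 - k) * fibPoly (2 * k - 1))) ∧
    (∀ n k : ℕ, 1 ≤ k → k ≤ n + 1 →
      g (2 * n + 1) k = (-1) ^ n * L (Polynomial.X ^ (n + 1 - k) * fibPoly (2 * k))) := by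
  have key1 : ∀ m j : ℕ, L (Polynomial.X ^ m * fibPoly (2*j+2)) =
      L (Polynomial.X ^ m * fibPoly (2*j+1)) + L (Polynomial.X ^ (m+1) * fibPoly (2*j)) := by
    intro m j
    have h : (Polynomial.X : Polynomial ℚ) ^ m * fibPoly (2*j+2) =
        Polynomial.X ^ m * fibPoly (2*j+1) + Polynomial.X ^ (m+1) * fibPoly (2*j) := by
      rw [show (2*j+2) = (2*j)+2 from rfl, fibPoly]; ring
    rw [h, map_add]
  have key2 : ∀ m j : ℕ, L (Polynomial.X ^ m * fibPoly (2*j+3)) =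
      L (Polynomial.X ^ m * fibPoly (2*j+2)) + L (Polynomial.X ^ (m+1) * fibPoly (2*j+1)) := by
    intro m j
    have h : (Polynomial.X : Polynomial ℚ) ^ m * fibPoly (2*j+3) =
        Polynomial.X ^ m * fibPoly (2*j+2) + Polynomial.X ^ (m+1) * fibPoly (2*j+1) := by
      rw [show (2*j+3) = (2*j+1)+2 from rfl, fibPoly]; ring
    rw [h, map_add]
  have main : ∀ n : ℕ,
      (∀ k : ℕ, 1 ≤ k → k ≤ n →
        g (2 * n) k = (-1) ^ n * L (Polynomial.X ^ (n + 1 - k) * fibPoly (2 * k - 1))) ∧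
      (∀ k : ℕ, 1 ≤ k → k ≤ n + 1 →
        g (2 * n + 1) k = (-1) ^ n * L (Polynomial.X ^ (n + 1 - k) * fibPoly (2 * k))) := by
    intro n
    induction n with
    | zero =>
      constructor
      · intro k hk hk'; omega
      · intro k hk hk'
        interval_cases k
        rw [show 2*0+1 = 1 from rfl, h11]
        have h : (Polynomial.X : Polynomial ℚ) ^ (0+1-1) * fibPoly (2*1) = fibPoly (2*0+1) := by
          norm_num [fibPoly]
        rw [h, hL 0]
        norm_num
    | succ n ih =>
      obtain ⟨ihE, ihO⟩ := ih
      have even_row : ∀ d k : ℕ, k + d = n + 2 → 1 ≤ k →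
          g (2*(n+1)) k = (-1)^(n+1) * L (Polynomial.X ^ (n+2-k) * fibPoly (2*k-1)) := by
        intro d
        induction d with
        | zero =>
          intro k hk hk1
          have hk2 : k = n + 2 := by omega
          subst hk2
          rw [hzero _ _ (Or.inr (by omega))]
          rw [show n+2-(n+2) = 0 from by omega, show 2*(n+2)-1 = 2*(n+1)+1 from by omega,
            pow_zero, one_mul, hL (n+1)]
          simp
        | succ d ihd =>
          intro k hk hk1
          have hkn : k ≤ n + 1 := by omega
          have hrec := heven (n+1) (by omega) k hk1 hkn
          rw [show 2*(n+1)-1 = 2*n+1 from by omega] at hrec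
          rw [hrec, ihd (k+1) (by omega) (by omega), ihO k hk1 (by omega)]
          obtain ⟨j, rfl⟩ : ∃ j, k = j + 1 := ⟨k-1, by omega⟩
          rw [show n + 2 - (j+1+1) = n - j from by omega,
            show n + 1 - (j+1) = n - j from by omega,
            show n + 2 - (j+1) = (n-j) + 1 from by omega,
            show 2*(j+1+1)-1 = 2*j+3 from by omega,
            show 2*(j+1)-1 = 2*j+1 from by omega,
            show 2*(j+1) = 2*j+2 from by omega,
            key2 (n-j) j]
          ring
      have odd_row : ∀ k : ℕ, k ≤ n + 2 →
          g (2*(n+1)+1) k = (-1)^(n+1) * L (Polynomial.X ^ (n+2-k) * fibPoly (2*k)) := by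
        intro k
        induction k with
        | zero =>
          intro _
          rw [hzero _ _ (Or.inl rfl)]
          simp [show 2*0 = 0 from rfl, fibPoly]
        | succ k ihk =>
          intro hk
          have hrec := hodd (n+1) (by omega) (k+1) (by omega) (by omega)
          rw [hrec]
          simp only [Nat.add_sub_cancel]
          rw [ihk (by omega), even_row (n+2-(k+1)) (k+1) (by omega) (by omega)]
          rw [show n + 2 - (k+1) = n + 1 - k from by omega,
            show 2*(k+1)-1 = 2*k+1 from by omega,
            show 2*(k+1) = 2*k+2 from by omega,
            show n + 2 - k = (n+1-k)+1 from by omega,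
            key1 (n+1-k) k]
          ring
      constructor
      · intro k hk hk'
        exact even_row (n+2-k) k (by omega) hk
      · intro k hk hk'
        exact odd_row k (by omega)
  exact ⟨fun n => (main n).1, fun n => (main n).2⟩
end
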